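/- For non-trivial connected graphs G and H (each with at least two vertices): if rc(G) ≥ 1 then rc(G ∘ H) = rc(G), and if rc(G) = 0 then rc(G ∘ H) = min{1, rc(H)}, where ∘ denotes the lexicographic product. -/

import Mathlib

open SimpleGraph

/-- The cop's sequence of positions, given his initial vertex `c₀` and a
(history-dependent) strategy `F`, where `F n` determines the cop's `(n+1)`-st
position from the robber's positions `r 0, …, r n` seen so far. -/
def copSeq {V : Type*} (c₀ : V) (F : (n : ℕ) → (Fin (n + 1) → V) → V)
    (r : ℕ → V) : ℕ → V
  | 0 => c₀
  | n + 1 => F n (fun i : Fin (n + 1) => r i)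

/-- The cop has a winning strategy in the cop and robber game with radius of
capture `k` on the graph `G`: the cop chooses a starting vertex and a strategy
such that, against every legal play of the robber (at each step the robber
stays or moves to an adjacent vertex; his moves may depend on the whole
history), the cop's play is legal and at some point of the game the distance
between the two players is at most `k`. -/
def CopWinRC {V : Type*} (G : SimpleGraph V) (k : ℕ) : Prop :=
  ∃ (c₀ : V) (F : (n : ℕ) → (Fin (n + 1) → V) → V),
    ∀ r : ℕ → V,
      (∀ i, r (i + 1) = r i ∨ G.Adj (r i) (r (i + 1))) →
      ((∀ n, copSeq c₀ F r (n + 1) = copSeq c₀ F r n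
            ∨ G.Adj (copSeq c₀ F r n) (copSeq c₀ F r (n + 1))) ∧
        ∃ n, G.dist (copSeq c₀ F r n) (r n) ≤ k
           ∨ G.dist (copSeq c₀ F r (n + 1)) (r n) ≤ k)

/-- The radius capture number of `G`: the least `k` such that the cop wins
the cop and robber game with radius of capture `k`. -/
noncomputable def rcNum {V : Type*} (G : SimpleGraph V) : ℕ :=
  sInf {k | CopWinRC G k}

/-- Eccentricity of a vertex: the maximum distance to another vertex. -/
noncomputable def graphEcc {V : Type*} (G : SimpleGraph V) (v : V) : ℕ :=
  sSup (Set.range (G.dist v))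

/-- Radius of a graph: the minimum eccentricity. -/
noncomputable def graphRad {V : Type*} (G : SimpleGraph V) : ℕ :=
  sInf (Set.range (graphEcc G))

/-- The lexicographic product of two graphs: `(g₁,h₁) ~ (g₂,h₂)` iff
`g₁ ~ g₂`, or `g₁ = g₂` and `h₁ ~ h₂`. -/
def lexProd {V W : Type*} (G : SimpleGraph V) (H : SimpleGraph W) :
    SimpleGraph (V × W) where
  Adj x y := G.Adj x.1 y.1 ∨ (x.1 = y.1 ∧ H.Adj x.2 y.2)
  symm := by
    constructor
    rintro x y (h | ⟨h1, h2⟩)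
    · exact Or.inl h.symm
    · exact Or.inr ⟨h1.symm, h2.symm⟩
  loopless := by
    constructor
    rintro x (h | ⟨-, h⟩)
    · exact G.irrefl h
    · exact H.irrefl h

section Core

open Classical

variable {α : Type*}

/-- One legal step of a player: stay or move along an edge. -/
def SRel (Γ : SimpleGraph α) (a b : α) : Prop := b = a ∨ Γ.Adj a b

lemma srel_refl (Γ : SimpleGraph α) (a : α) : SRel Γ a a := Or.inl rfl

/-- Positional "cop eventually gets within distance k" relation. -/
inductive Caught (Γ : SimpleGraph α) (k : ℕ) : α → α → Prop
  | move {c r : α} (c' : α) (h1 : SRel Γ c c') (h2 : Γ.dist c' r ≤ k) : Caught Γ k c r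
  | step {c r : α} (c' : α) (h1 : SRel Γ c c')
      (h2 : ∀ r', SRel Γ r r' → Caught Γ k c' r') : Caught Γ k c r

/-- Finite-rank approximation of `Caught`. -/
def CaughtN (Γ : SimpleGraph α) (k : ℕ) : ℕ → α → α → Prop
  | 0, c, r => ∃ c', SRel Γ c c' ∧ Γ.dist c' r ≤ k
  | n+1, c, r => CaughtN Γ k n c r ∨
      ∃ c', SRel Γ c c' ∧ ∀ r', SRel Γ r r' → CaughtN Γ k n c' r'

lemma caughtN_mono {Γ : SimpleGraph α} {k : ℕ} :
    ∀ {n m : ℕ}, n ≤ m → ∀ {c r : α}, CaughtN Γ k n c r → CaughtN Γ k m c r := by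
  intro n m hnm
  induction hnm with
  | refl => exact fun h => h
  | step _ ih => exact fun h => Or.inl (ih h)

lemma caughtN_caught {Γ : SimpleGraph α} {k : ℕ} :
    ∀ {n : ℕ} {c r : α}, CaughtN Γ k n c r → Caught Γ k c r := by
  intro n
  induction n with
  | zero => rintro c r ⟨c', h1, h2⟩; exact Caught.move c' h1 h2
  | succ n ih =>
    rintro c r (h | ⟨c', h1, h2⟩)
    · exact ih h
    · exact Caught.step c' h1 fun r' hr' => ih (h2 r' hr')

lemma bdd_choice [Fintype α] {P : α → Prop} {Q : ℕ → α → Prop}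
    (mono : ∀ {n m : ℕ}, n ≤ m → ∀ a, Q n a → Q m a)
    (h : ∀ a, P a → ∃ n, Q n a) : ∃ N, ∀ a, P a → Q N a := by
  classical
  choose f hf using h
  refine ⟨Finset.univ.sup (fun a => if h : P a then f a h else 0),
    fun a ha => mono ?_ a (hf a ha)⟩
  have h2 := Finset.le_sup (f := fun a => if h : P a then f a h else 0)
    (Finset.mem_univ a)
  simp only [dif_pos ha] at h2
  exact h2

lemma caught_caughtN [Fintype α] {Γ : SimpleGraph α} {k : ℕ} {c r : α}
    (h : Caught Γ k c r) : ∃ n, CaughtN Γ k n c r := by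
  induction h with
  | move c' h1 h2 => exact ⟨0, c', h1, h2⟩
  | step c' h1 h2 ih =>
    obtain ⟨N, hN⟩ := bdd_choice (Q := fun n a => CaughtN Γ k n c' a)
      (fun hnm a h => caughtN_mono hnm h) ih
    exact ⟨N + 1, Or.inr ⟨c', h1, fun r' hr' => hN r' hr'⟩⟩

/-- Rank of a caught position. -/
noncomputable def CRank (Γ : SimpleGraph α) (k : ℕ) (c r : α) : ℕ :=
  sInf {n | CaughtN Γ k n c r}

lemma crank_spec [Fintype α] {Γ : SimpleGraph α} {k : ℕ} {c r : α}
    (h : Caught Γ k c r) : CaughtN Γ k (CRank Γ k c r) c r :=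
  Nat.sInf_mem (caught_caughtN h)

lemma exists_good_move [Fintype α] {Γ : SimpleGraph α} {k : ℕ} {c r : α}
    (h : Caught Γ k c r) (h0 : ¬ ∃ c', SRel Γ c c' ∧ Γ.dist c' r ≤ k) :
    ∃ c', SRel Γ c c' ∧ ∀ r', SRel Γ r r' →
      Caught Γ k c' r' ∧ CRank Γ k c' r' < CRank Γ k c r := by
  have hm := crank_spec h
  rcases hn : CRank Γ k c r with _ | m
  · rw [hn] at hm; exact absurd hm h0
  · rw [hn] at hm
    rcases hm with hm | ⟨c', h1, h2⟩
    · have h3 : CRank Γ k c r ≤ m := Nat.sInf_le hm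
      omega
    · refine ⟨c', h1, fun r' hr' => ⟨caughtN_caught (h2 r' hr'), ?_⟩⟩
      have h3 : CRank Γ k c' r' ≤ m := Nat.sInf_le (h2 r' hr')
      omega

/-- The positional cop strategy extracted from `Caught`. -/
noncomputable def copMove [Fintype α] (Γ : SimpleGraph α) (k : ℕ) (c r : α) : α :=
  if h0 : ∃ c', SRel Γ c c' ∧ Γ.dist c' r ≤ k then h0.choose
  else if h : Caught Γ k c r then (exists_good_move h h0).choose
  else c

lemma copMove_srel [Fintype α] (Γ : SimpleGraph α) (k : ℕ) (c r : α) :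
    SRel Γ c (copMove Γ k c r) := by
  unfold copMove
  split_ifs with h0 h
  · exact h0.choose_spec.1
  · exact (exists_good_move h h0).choose_spec.1
  · exact srel_refl Γ c

lemma copMove_capture [Fintype α] {Γ : SimpleGraph α} {k : ℕ} {c r : α}
    (h0 : ∃ c', SRel Γ c c' ∧ Γ.dist c' r ≤ k) : Γ.dist (copMove Γ k c r) r ≤ k := by
  unfold copMove; rw [dif_pos h0]; exact h0.choose_spec.2

lemma copMove_prog [Fintype α] {Γ : SimpleGraph α} {k : ℕ} {c r : α}
    (h : Caught Γ k c r) (h0 : ¬ ∃ c', SRel Γ c c' ∧ Γ.dist c' r ≤ k) :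
    ∀ r', SRel Γ r r' →
      Caught Γ k (copMove Γ k c r) r' ∧ CRank Γ k (copMove Γ k c r) r' < CRank Γ k c r := by
  unfold copMove; rw [dif_neg h0, dif_pos h]; exact (exists_good_move h h0).choose_spec.2

/-- The cop trajectory for a positional strategy. -/
def simSeq (σ : α → α → α) (c0 : α) (r : ℕ → α) : ℕ → α
  | 0 => c0
  | n+1 => σ (simSeq σ c0 r n) (r n)

lemma simSeq_congr (σ : α → α → α) (c0 : α) {r r' : ℕ → α} :
    ∀ n, (∀ i < n, r i = r' i) → simSeq σ c0 r n = simSeq σ c0 r' n := by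
  intro n
  induction n with
  | zero => intro _; rfl
  | succ n ih =>
    intro h
    show σ (simSeq σ c0 r n) (r n) = σ (simSeq σ c0 r' n) (r' n)
    rw [ih (fun i hi => h i (by omega)), h n (by omega)]

/-- The history strategy induced by a positional strategy. -/
def posF (σ : α → α → α) (c0 : α) : (n : ℕ) → (Fin (n + 1) → α) → α :=
  fun n hist => simSeq σ c0 (fun i => hist ⟨min i n, by omega⟩) (n+1)

lemma copSeq_posF (σ : α → α → α) (c0 : α) (r : ℕ → α) :
    ∀ n, copSeq c0 (posF σ c0) r n = simSeq σ c0 r n := by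
  intro n
  cases n with
  | zero => rfl
  | succ n =>
    show simSeq σ c0 (fun i => r (min i n)) (n+1) = simSeq σ c0 r (n+1)
    exact simSeq_congr σ c0 (n+1) (fun i hi => by
      congr 1; omega)

lemma sim_catch [Fintype α] {Γ : SimpleGraph α} {k : ℕ} {c0 : α} {r : ℕ → α}
    (hr : ∀ i, SRel Γ (r i) (r (i+1))) :
    ∀ N n, Caught Γ k (simSeq (copMove Γ k) c0 r n) (r n) →
      CRank Γ k (simSeq (copMove Γ k) c0 r n) (r n) ≤ N →
      ∃ m, Γ.dist (simSeq (copMove Γ k) c0 r m) (r m) ≤ k ∨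
           Γ.dist (simSeq (copMove Γ k) c0 r (m+1)) (r m) ≤ k := by
  intro N
  induction N with
  | zero =>
    intro n h hrk
    by_cases h0 : ∃ c', SRel Γ (simSeq (copMove Γ k) c0 r n) c' ∧ Γ.dist c' (r n) ≤ k
    · exact ⟨n, Or.inr (copMove_capture h0)⟩
    · exfalso
      have := crank_spec h
      rw [Nat.le_zero.mp hrk] at this
      exact h0 this
  | succ N ih =>
    intro n h hrk
    by_cases h0 : ∃ c', SRel Γ (simSeq (copMove Γ k) c0 r n) c' ∧ Γ.dist c' (r n) ≤ k
    · exact ⟨n, Or.inr (copMove_capture h0)⟩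
    · have hp := copMove_prog h h0 (r (n+1)) (hr n)
      have h2 : CRank Γ k (simSeq (copMove Γ k) c0 r (n+1)) (r (n+1)) <
          CRank Γ k (simSeq (copMove Γ k) c0 r n) (r n) := hp.2
      exact ih (n+1) hp.1 (by omega)

/-- From the positional catching relation to a winning cop strategy. -/
theorem caught_to_copWin [Fintype α] (Γ : SimpleGraph α) (k : ℕ)
    (h : ∃ c0, ∀ r0, Caught Γ k c0 r0) : CopWinRC Γ k := by
  obtain ⟨c0, hc0⟩ := h
  refine ⟨c0, posF (copMove Γ k) c0, fun r hr => ⟨?_, ?_⟩⟩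
  · intro n
    rw [copSeq_posF, copSeq_posF]
    exact copMove_srel Γ k (simSeq (copMove Γ k) c0 r n) (r n)
  · obtain ⟨m, hm⟩ := sim_catch (Γ := Γ) (k := k) (c0 := c0) hr
      (CRank Γ k c0 (r 0)) 0 (hc0 (r 0)) le_rfl
    exact ⟨m, by rw [copSeq_posF, copSeq_posF]; exact hm⟩

lemma not_caught_dist {Γ : SimpleGraph α} {k : ℕ} {c r : α}
    (h : ¬ Caught Γ k c r) : ¬ (Γ.dist c r ≤ k) :=
  fun hd => h (Caught.move c (srel_refl Γ c) hd)

lemma not_caught_step {Γ : SimpleGraph α} {k : ℕ} {c r : α}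
    (h : ¬ Caught Γ k c r) {c' : α} (hc : SRel Γ c c') :
    ∃ r', SRel Γ r r' ∧ ¬ Caught Γ k c' r' := by
  by_contra hx
  push_neg at hx
  exact h (Caught.step c' hc hx)

lemma copSeq_congr {c0 : α} {F : (n : ℕ) → (Fin (n + 1) → α) → α} {r r' : ℕ → α} :
    ∀ n, (∀ i < n, r i = r' i) → copSeq c0 F r n = copSeq c0 F r' n := by
  intro n h
  cases n with
  | zero => rfl
  | succ n =>
    show F n (fun i => r i) = F n (fun i => r' i)
    congr 1
    funext i
    exact h i i.2

/-- Prefix-accumulating evasion sequence. -/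
def preSeq (r0 : α) (nxt : ℕ → (ℕ → α) → α) : ℕ → ℕ → α
  | 0, _ => r0
  | n+1, m => if m ≤ n then preSeq r0 nxt n m else nxt n (preSeq r0 nxt n)

lemma preSeq_coh (r0 : α) (nxt : ℕ → (ℕ → α) → α) :
    ∀ n m, m ≤ n → preSeq r0 nxt n m = preSeq r0 nxt m m := by
  intro n
  induction n with
  | zero => intro m hm; rw [Nat.le_zero.mp hm]
  | succ n ih =>
    intro m hm
    rcases Nat.lt_or_ge m (n+1) with hl | hg
    · show (if m ≤ n then preSeq r0 nxt n m else _) = _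
      rw [if_pos (Nat.lt_succ_iff.mp hl)]
      exact ih m (Nat.lt_succ_iff.mp hl)
    · rw [le_antisymm hm hg]

/-- From a winning cop strategy to the positional catching relation. -/
theorem copWin_to_caught (Γ : SimpleGraph α) (k : ℕ)
    (h : CopWinRC Γ k) : ∃ c0, ∀ r0, Caught Γ k c0 r0 := by
  by_contra hcon
  push_neg at hcon
  obtain ⟨c0, F, hF⟩ := h
  obtain ⟨r0, hr0⟩ := hcon c0
  set Cond : ℕ → (ℕ → α) → Prop := fun n prev =>
    SRel Γ (copSeq c0 F prev n) (copSeq c0 F prev (n+1)) ∧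
      ¬ Caught Γ k (copSeq c0 F prev n) (prev n) with hCond
  obtain ⟨nxt, hnxt⟩ : ∃ nxt : ℕ → (ℕ → α) → α, ∀ n prev,
      (Cond n prev → SRel Γ (prev n) (nxt n prev) ∧
        ¬ Caught Γ k (copSeq c0 F prev (n+1)) (nxt n prev)) ∧
      (¬ Cond n prev → nxt n prev = prev n) := by
    refine ⟨fun n prev => if h : Cond n prev
      then (not_caught_step h.2 h.1).choose else prev n,
      fun n prev => ⟨fun h => ?_, fun h => ?_⟩⟩
    · beta_reduce
      rw [dif_pos h]
      exact (not_caught_step h.2 h.1).choose_spec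
    · beta_reduce
      exact dif_neg h
  set rs : ℕ → α := fun n => preSeq r0 nxt n n with hrs
  have hstep : ∀ n, rs (n+1) = nxt n (preSeq r0 nxt n) := by
    intro n
    show (if n+1 ≤ n then _ else nxt n (preSeq r0 nxt n)) = _
    rw [if_neg (by omega)]
  have hpre : ∀ n m, m ≤ n → preSeq r0 nxt n m = rs m := fun n m hm => preSeq_coh r0 nxt n m hm
  have hcs : ∀ n m, m ≤ n + 1 → copSeq c0 F (preSeq r0 nxt n) m = copSeq c0 F rs m := by
    intro n m hm
    exact copSeq_congr m (fun i hi => hpre n i (by omega))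
  have hlegal : ∀ i, rs (i+1) = rs i ∨ Γ.Adj (rs i) (rs (i+1)) := by
    intro n
    rw [hstep n]
    by_cases h : Cond n (preSeq r0 nxt n)
    · have := ((hnxt n (preSeq r0 nxt n)).1 h).1
      rw [hpre n n le_rfl] at this
      exact this
    · rw [(hnxt n (preSeq r0 nxt n)).2 h, hpre n n le_rfl]
      exact Or.inl rfl
  obtain ⟨hcop, m, hcap⟩ := hF rs hlegal
  have hinv : ∀ n, ¬ Caught Γ k (copSeq c0 F rs n) (rs n) := by
    intro n
    induction n with
    | zero => exact hr0
    | succ n ih =>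
      have hc : Cond n (preSeq r0 nxt n) := by
        rw [hCond]
        constructor
        · rw [hcs n n (by omega), hcs n (n+1) le_rfl]
          exact hcop n
        · rw [hcs n n (by omega), hpre n n le_rfl]
          exact ih
      have := ((hnxt n (preSeq r0 nxt n)).1 hc).2
      rw [hcs n (n+1) le_rfl, ← hstep n] at this
      exact this
  rcases hcap with hd | hd
  · exact not_caught_dist (hinv m) hd
  · exact hinv m (Caught.move (copSeq c0 F rs (m+1)) (hcop m) hd)

end Core

section Graphs

variable {V W : Type*} (G : SimpleGraph V) (H : SimpleGraph W)

lemma copWinRC_graphEcc {α : Type*} [Fintype α] (Γ : SimpleGraph α) (c0 : α) :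
    CopWinRC Γ (graphEcc Γ c0) := by
  refine ⟨c0, fun _ _ => c0, fun r hr =>
    ⟨fun n => Or.inl (by cases n <;> rfl), ⟨0, Or.inl ?_⟩⟩⟩
  exact le_csSup (Set.Finite.bddAbove (Set.finite_range _)) ⟨r 0, rfl⟩

lemma exists_adj_of_connected (hG : G.Connected) [Nontrivial V] (a : V) :
    ∃ b, G.Adj a b := by
  obtain ⟨b, hb⟩ := exists_ne a
  obtain ⟨w⟩ := hG a b
  cases w with
  | nil => exact absurd rfl hb.symm
  | cons h _ => exact ⟨_, h⟩

lemma dist_le_one_of_adj {α : Type*} {Γ : SimpleGraph α} {u v : α} (h : Γ.Adj u v) :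
    Γ.dist u v ≤ 1 := by
  simpa using SimpleGraph.dist_le (SimpleGraph.Walk.cons h SimpleGraph.Walk.nil)

lemma lex_walk_of_G_walk (x y : W) : ∀ {a g : V} (p : G.Walk a g), a ≠ g →
    ∃ q : (lexProd G H).Walk (a, x) (g, y), q.length ≤ p.length := by
  intro a g p
  induction p with
  | nil => intro h; exact absurd rfl h
  | @cons u v w h p ih =>
    intro _
    by_cases hvw : v = w
    · subst hvw
      exact ⟨SimpleGraph.Walk.cons (Or.inl h) SimpleGraph.Walk.nil, by exact Nat.succ_le_succ (Nat.zero_le _)⟩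
    · obtain ⟨q, hq⟩ := ih hvw
      exact ⟨SimpleGraph.Walk.cons (Or.inl h) q, by exact Nat.succ_le_succ hq⟩

lemma dist_lex_le_of_ne (hG : G.Connected) {a g : V} (hne : a ≠ g) (x y : W) :
    (lexProd G H).dist (a, x) (g, y) ≤ G.dist a g := by
  obtain ⟨p, hp⟩ := hG.exists_walk_length_eq_dist a g
  obtain ⟨q, hq⟩ := lex_walk_of_G_walk G H x y p hne
  exact le_trans (SimpleGraph.dist_le q) (hp ▸ hq)

lemma G_walk_of_lex_walk : ∀ {X Y : V × W} (q : (lexProd G H).Walk X Y),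
    ∃ p : G.Walk X.1 Y.1, p.length ≤ q.length := by
  intro X Y q
  induction q with
  | nil => exact ⟨SimpleGraph.Walk.nil, le_rfl⟩
  | cons h q ih =>
    obtain ⟨p, hp⟩ := ih
    rcases h with h | ⟨heq, -⟩
    · exact ⟨SimpleGraph.Walk.cons h p, Nat.succ_le_succ hp⟩
    · exact ⟨p.copy heq.symm rfl, by simp only [SimpleGraph.Walk.length_copy,
        SimpleGraph.Walk.length_cons]; exact Nat.le_succ_of_le hp⟩

lemma dist_fst_le (hL : (lexProd G H).Connected) (X Y : V × W) :
    G.dist X.1 Y.1 ≤ (lexProd G H).dist X Y := by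
  obtain ⟨q, hq⟩ := hL.exists_walk_length_eq_dist X Y
  obtain ⟨p, hp⟩ := G_walk_of_lex_walk G H q
  exact le_trans (SimpleGraph.dist_le p) (hq ▸ hp)

lemma lex_connected (hG : G.Connected) [Nontrivial V] [Nonempty W] :
    (lexProd G H).Connected := by
  rw [SimpleGraph.connected_iff]
  refine ⟨fun X Y => ?_, inferInstance⟩
  rcases X with ⟨a, x⟩; rcases Y with ⟨g, y⟩
  by_cases hag : a = g
  · subst hag
    obtain ⟨b, hb⟩ := exists_adj_of_connected G hG a
    exact SimpleGraph.Walk.reachable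
      (SimpleGraph.Walk.cons (show (lexProd G H).Adj (a, x) (b, y) from Or.inl hb)
        (SimpleGraph.Walk.cons (show (lexProd G H).Adj (b, y) (a, y) from Or.inl hb.symm)
          SimpleGraph.Walk.nil))
  · obtain ⟨w⟩ := hG a g
    obtain ⟨q, -⟩ := lex_walk_of_G_walk G H x y w hag
    exact ⟨q⟩

lemma srel_lex_of_G {a c' : V} (h : SRel G a c') (x : W) :
    SRel (lexProd G H) (a, x) (c', x) := by
  rcases h with rfl | h
  · exact Or.inl rfl
  · exact Or.inr (Or.inl h)

lemma srel_G_of_lex {X Y : V × W} (h : SRel (lexProd G H) X Y) : SRel G X.1 Y.1 := by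
  rcases h with rfl | h | ⟨heq, -⟩
  · exact Or.inl rfl
  · exact Or.inr h
  · exact Or.inl heq.symm

theorem caught_lex_of_caught_G (hG : G.Connected) [Nontrivial V] {k : ℕ}
    {a g : V} (h : Caught G k a g) :
    ∀ x y : W, Caught (lexProd G H) (max 1 k) (a, x) (g, y) := by
  induction h with
  | @move c r c' h1 h2 =>
    intro x y
    by_cases hcr : c' = r
    · subst hcr
      rcases h1 with rfl | h1
      · obtain ⟨b, hb⟩ := exists_adj_of_connected G hG c'
        exact Caught.move (b, y) (Or.inr (Or.inl hb))
          (le_trans (dist_le_one_of_adj (Or.inl hb.symm)) (le_max_left 1 k))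
      · exact Caught.move (c', y) (Or.inr (Or.inl h1))
          (by rw [SimpleGraph.dist_self]; omega)
    · exact Caught.move (c', x) (srel_lex_of_G G H h1 x)
        (le_trans (le_trans (dist_lex_le_of_ne G H hG hcr x y) h2) (le_max_right 1 k))
  | @step c r c' h1 h2 ih =>
    intro x y
    refine Caught.step (c', x) (srel_lex_of_G G H h1 x) ?_
    rintro ⟨g', y'⟩ hstep'
    exact ih g' (srel_G_of_lex G H hstep') x y'

theorem caught_G_of_caught_lex (hL : (lexProd G H).Connected) {k : ℕ} :
    ∀ {X R : V × W}, Caught (lexProd G H) k X R → Caught G k X.1 R.1 := by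
  intro X R h
  induction h with
  | @move C R' C'' h1 h2 =>
    exact Caught.move C''.1 (srel_G_of_lex G H h1)
      (le_trans (dist_fst_le G H hL C'' R') h2)
  | @step C R' C' h1 h2 ih =>
    refine Caught.step C'.1 (srel_G_of_lex G H h1) ?_
    intro r' hr'
    have hs : SRel (lexProd G H) R' (r', R'.2) := by
      rcases hr' with h | h
      · exact Or.inl (by rw [h, Prod.mk.eta])
      · exact Or.inr (Or.inl h)
    exact ih (r', R'.2) hs

theorem caught_lex_same_fiber (hH : H.Connected) {x y : W}
    (h : Caught H 0 x y) : ∀ a : V, Caught (lexProd G H) 0 (a, x) (a, y) := by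
  induction h with
  | @move x' y' c' h1 h2 =>
    intro a
    have hc : c' = y' := (hH.dist_eq_zero_iff).mp (Nat.le_zero.mp h2)
    rw [hc] at h1
    refine Caught.move (a, y') ?_ (by rw [SimpleGraph.dist_self])
    rcases h1 with heq | h1
    · exact Or.inl (by rw [heq])
    · exact Or.inr (Or.inr ⟨rfl, h1⟩)
  | @step x' y' c' h1 h2 ih =>
    intro a
    refine Caught.step (a, c') ?_ ?_
    · rcases h1 with rfl | h1
      · exact Or.inl rfl
      · exact Or.inr (Or.inr ⟨rfl, h1⟩)
    · rintro ⟨g', y''⟩ hstep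
      rcases hstep with heq | hadj | ⟨heq, hadj⟩
      · rw [heq]
        exact ih y' (srel_refl H y') a
      · exact Caught.move (g', y'') (Or.inr (Or.inl hadj))
          (by rw [SimpleGraph.dist_self])
      · subst heq
        exact ih y'' (Or.inr hadj) a

theorem caught_lex_main (hG : G.Connected) (hH : H.Connected) {x0 : W}
    (hx0 : ∀ y, Caught H 0 x0 y) :
    ∀ {a g : V}, Caught G 0 a g → ∀ y : W, Caught (lexProd G H) 0 (a, x0) (g, y) := by
  intro a g h
  induction h with
  | @move c r c' h1 h2 =>
    intro y
    have hc : c' = r := hG.dist_eq_zero_iff.mp (Nat.le_zero.mp h2)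
    rw [hc] at h1
    rcases h1 with heq | h1
    · rw [heq]
      exact caught_lex_same_fiber G H hH (hx0 y) c
    · exact Caught.move (r, y) (Or.inr (Or.inl h1)) (by rw [SimpleGraph.dist_self])
  | @step c r c' h1 h2 ih =>
    intro y
    refine Caught.step (c', x0) (srel_lex_of_G G H h1 x0) ?_
    rintro ⟨g', y'⟩ hstep
    exact ih g' (srel_G_of_lex G H hstep) y'

theorem not_caught_lex_zero (hL : (lexProd G H).Connected)
    (hPg : ∀ x : W, ∃ y, ¬ Caught H 0 x y) :
    ∀ {C R : V × W}, Caught (lexProd G H) 0 C R →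
      ¬ (C.1 = R.1 ∧ ¬ Caught H 0 C.2 R.2) := by
  intro C R h
  induction h with
  | @move C R C'' h1 h2 =>
    rintro ⟨hfib, hnc⟩
    have hc : C'' = R := hL.dist_eq_zero_iff.mp (Nat.le_zero.mp h2)
    rw [hc] at h1
    rcases h1 with heq | hadj | ⟨-, hadj⟩
    · exact hnc (Caught.move R.2 (Or.inl (congrArg Prod.snd heq))
        (by rw [SimpleGraph.dist_self]))
    · rw [hfib] at hadj
      exact G.irrefl hadj
    · exact hnc (Caught.move R.2 (Or.inr hadj) (by rw [SimpleGraph.dist_self]))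
  | @step C R C' h1 h2 ih =>
    rintro ⟨hfib, hnc⟩
    rcases h1 with heq | hadj | ⟨heq, hadj⟩
    · exact ih R (srel_refl _ R) ⟨by rw [heq]; exact hfib, by rw [heq]; exact hnc⟩
    · obtain ⟨y'', hy''⟩ := hPg C'.2
      refine ih (C'.1, y'') (Or.inr (Or.inl ?_)) ⟨rfl, hy''⟩
      rw [← hfib]; exact hadj
    · obtain ⟨y', hy1, hy2⟩ := not_caught_step hnc (Or.inr hadj : SRel H C.2 C'.2)
      refine ih (R.1, y') ?_ ⟨by rw [← heq]; exact hfib, hy2⟩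
      rcases hy1 with rfl | hy1
      · exact Or.inl (Prod.mk.eta)
      · exact Or.inr (Or.inr ⟨rfl, hy1⟩)

end Graphs

/-- For non-trivial connected graphs `G` and `H`: if `rc(G) ≥ 1` then
`rc(G ∘ H) = rc(G)`, and if `rc(G) = 0` then `rc(G ∘ H) = min 1 (rc H)`. -/
theorem rcNum_lexProd {V W : Type*} [Fintype V] [Fintype W]
    [Nontrivial V] [Nontrivial W]
    (G : SimpleGraph V) (H : SimpleGraph W)
    (hG : G.Connected) (hH : H.Connected) :
    (1 ≤ rcNum G → rcNum (lexProd G H) = rcNum G) ∧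
    (rcNum G = 0 → rcNum (lexProd G H) = min 1 (rcNum H)) := by
  classical
  have hL : (lexProd G H).Connected := lex_connected G H hG
  have hSG : {k | CopWinRC G k}.Nonempty :=
    ⟨_, copWinRC_graphEcc G (Classical.arbitrary V)⟩
  have hSH : {k | CopWinRC H k}.Nonempty :=
    ⟨_, copWinRC_graphEcc H (Classical.arbitrary W)⟩
  have hSL : {k | CopWinRC (lexProd G H) k}.Nonempty :=
    ⟨_, copWinRC_graphEcc (lexProd G H) (Classical.arbitrary (V × W))⟩
  have lower : ∀ k, CopWinRC (lexProd G H) k → CopWinRC G k := by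
    intro k hk
    obtain ⟨C0, hC0⟩ := copWin_to_caught _ k hk
    exact caught_to_copWin G k ⟨C0.1, fun r0 =>
      caught_G_of_caught_lex G H hL (hC0 (r0, C0.2))⟩
  have upper : ∀ k, CopWinRC G k → CopWinRC (lexProd G H) (max 1 k) := by
    intro k hk
    obtain ⟨a0, ha0⟩ := copWin_to_caught G k hk
    refine caught_to_copWin _ _ ⟨(a0, Classical.arbitrary W), ?_⟩
    rintro ⟨g, y⟩
    exact caught_lex_of_caught_G G H hG (ha0 g) _ y
  constructor
  · intro h1
    have e1 : rcNum G ≤ rcNum (lexProd G H) :=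
      Nat.sInf_le (lower _ (Nat.sInf_mem hSL))
    have e2 : rcNum (lexProd G H) ≤ rcNum G := by
      have h2 : CopWinRC (lexProd G H) (1 ⊔ rcNum G) := upper _ (Nat.sInf_mem hSG)
      rw [sup_eq_right.mpr h1] at h2
      exact Nat.sInf_le h2
    omega
  · intro h0
    have hG0 : CopWinRC G 0 := by
      have := Nat.sInf_mem hSG
      rw [show sInf {k | CopWinRC G k} = rcNum G from rfl, h0] at this
      exact this
    by_cases hH0 : rcNum H = 0
    · have hH0' : CopWinRC H 0 := by
        have := Nat.sInf_mem hSH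
        rw [show sInf {k | CopWinRC H k} = rcNum H from rfl, hH0] at this
        exact this
      obtain ⟨a0, ha0⟩ := copWin_to_caught G 0 hG0
      obtain ⟨x0, hx0⟩ := copWin_to_caught H 0 hH0'
      have hLwin : CopWinRC (lexProd G H) 0 := by
        refine caught_to_copWin _ _ ⟨(a0, x0), ?_⟩
        rintro ⟨g, y⟩
        exact caught_lex_main G H hG hH hx0 (ha0 g) y
      have hz : rcNum (lexProd G H) = 0 := Nat.le_zero.mp (Nat.sInf_le hLwin)
      rw [hz, hH0]
      simp
    · have hub : CopWinRC (lexProd G H) 1 := by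
        have h2 := upper 0 hG0
        simpa using h2
      have hPg : ∀ x : W, ∃ y, ¬ Caught H 0 x y := by
        intro x
        by_contra hx
        push_neg at hx
        have hcw : CopWinRC H 0 := caught_to_copWin H 0 ⟨x, hx⟩
        exact hH0 (Nat.le_zero.mp (Nat.sInf_le hcw))
      have hnot : ¬ CopWinRC (lexProd G H) 0 := by
        intro hcw
        obtain ⟨C0, hC0⟩ := copWin_to_caught _ 0 hcw
        obtain ⟨y0, hy0⟩ := hPg C0.2
        exact not_caught_lex_zero G H hL hPg (hC0 (C0.1, y0)) ⟨rfl, hy0⟩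
      have hle : rcNum (lexProd G H) ≤ 1 := Nat.sInf_le hub
      have hne0 : rcNum (lexProd G H) ≠ 0 := by
        intro hz
        refine hnot ?_
        have := Nat.sInf_mem hSL
        rwa [show sInf {k | CopWinRC (lexProd G H) k} = rcNum (lexProd G H) from rfl,
          hz] at this
      have hH1 : 1 ≤ rcNum H := Nat.one_le_iff_ne_zero.mpr hH0
      rw [min_eq_left hH1]
      omega
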